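/- arXiv:2601.19320 — 5 statements merged into one kernel-verified Lean document; each statement's English description precedes it below -/
import Mathlib

section
/- For every real c with c² < 1, ∫_{−π/2}^{π/2} 1/(1 + c·cos x)² dx = (4/(1−c²)^{3/2})·arctan(√((1−c)/(1+c))) − 2c/(1−c²). -/
open Real

/-- For `c² < 1`,
`∫_{−π/2}^{π/2} dx/(1 + c·cos x)² = (4/(1−c²)^{3/2})·arctan(√((1−c)/(1+c))) − 2c/(1−c²)`. -/
theorem integral_one_div_one_add_cos_sq (c : ℝ) (hc : c ^ 2 < 1) :
    ∫ x in (-(Real.pi / 2))..(Real.pi / 2), 1 / (1 + c * Real.cos x) ^ 2 =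
      (4 / (1 - c ^ 2) ^ ((3 : ℝ) / 2)) * Real.arctan (Real.sqrt ((1 - c) / (1 + c))) -
        2 * c / (1 - c ^ 2) := by
  have h1 : -1 < c := by nlinarith
  have h2 : c < 1 := by nlinarith
  have hcm : (0:ℝ) < 1 - c := by linarith
  have hcp : (0:ℝ) < 1 + c := by linarith
  have hc1 : (0:ℝ) < 1 - c ^ 2 := by nlinarith
  set s : ℝ := Real.sqrt (1 - c ^ 2) with hs
  set t : ℝ := Real.sqrt ((1 - c) / (1 + c)) with ht
  have hspos : 0 < s := Real.sqrt_pos.2 hc1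
  have hs2 : s ^ 2 = 1 - c ^ 2 := Real.sq_sqrt hc1.le
  have ht2 : t ^ 2 = (1 - c) / (1 + c) := Real.sq_sqrt (by positivity)
  have hst : s = t * (1 + c) := by
    rw [hs, ht, show (1:ℝ) - c ^ 2 = ((1 - c) / (1 + c)) * (1 + c) ^ 2 by
      field_simp; ring, Real.sqrt_mul (by positivity), Real.sqrt_sq hcp.le]
  have hD : ∀ x : ℝ, 0 < 1 + c * Real.cos x := by
    intro x
    have hac : |c| < 1 := abs_lt.2 ⟨h1, h2⟩
    have h3 : |c * Real.cos x| ≤ |c| := by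
      rw [abs_mul]
      exact mul_le_of_le_one_right (abs_nonneg c) (Real.abs_cos_le_one x)
    have := neg_abs_le (c * Real.cos x)
    linarith
  set F : ℝ → ℝ := fun x =>
    (1 / (1 - c ^ 2)) * ((2 / s) * Real.arctan (t * Real.tan (x / 2))
      - c * Real.sin x / (1 + c * Real.cos x)) with hF
  have hderiv : ∀ x ∈ Set.uIcc (-(Real.pi / 2)) (Real.pi / 2),
      HasDerivAt F (1 / (1 + c * Real.cos x) ^ 2) x := by
    intro x hx
    rw [Set.uIcc_of_le (by linarith [Real.pi_pos] : -(Real.pi/2) ≤ Real.pi/2)] at hx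
    have hcos2 : 0 < Real.cos (x / 2) := by
      apply Real.cos_pos_of_mem_Ioo
      constructor
      · have := hx.1; linarith [Real.pi_pos]
      · have := hx.2; linarith [Real.pi_pos]
    have hcosne : Real.cos (x / 2) ≠ 0 := ne_of_gt hcos2
    have hhalf : HasDerivAt (fun y : ℝ => y / 2) (1 / 2) x := by
      simpa using (hasDerivAt_id x).div_const 2
    have htan : HasDerivAt (fun y : ℝ => Real.tan (y / 2))
        (1 / Real.cos (x / 2) ^ 2 * (1 / 2)) x :=
      (Real.hasDerivAt_tan hcosne).comp (h := fun y : ℝ => y / 2) x hhalf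
    have hmul : HasDerivAt (fun y : ℝ => t * Real.tan (y / 2))
        (t * (1 / Real.cos (x / 2) ^ 2 * (1 / 2))) x := htan.const_mul t
    have harct : HasDerivAt (fun y : ℝ => Real.arctan (t * Real.tan (y / 2)))
        (1 / (1 + (t * Real.tan (x / 2)) ^ 2) * (t * (1 / Real.cos (x / 2) ^ 2 * (1 / 2)))) x :=
      (Real.hasDerivAt_arctan (t * Real.tan (x / 2))).comp (h := fun y : ℝ => t * Real.tan (y / 2)) x hmul
    have hden : HasDerivAt (fun y : ℝ => 1 + c * Real.cos y) (c * (-Real.sin x)) x := by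
      simpa using ((Real.hasDerivAt_cos x).const_mul c).const_add 1
    have hq : HasDerivAt (fun y : ℝ => c * Real.sin y / (1 + c * Real.cos y))
        ((c * Real.cos x * (1 + c * Real.cos x) - c * Real.sin x * (c * (-Real.sin x)))
          / (1 + c * Real.cos x) ^ 2) x :=
      (((Real.hasDerivAt_sin x).const_mul c).div hden (ne_of_gt (hD x)))
    have hFd := ((harct.const_mul (2 / s)).sub hq).const_mul (1 / (1 - c ^ 2))
    refine hFd.congr_deriv (Eq.symm ?_)
    have hsin2 : Real.sin (x / 2) ^ 2 = 1 - Real.cos (x / 2) ^ 2 := by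
      nlinarith [Real.sin_sq_add_cos_sq (x / 2)]
    have hcosx : Real.cos x = 2 * Real.cos (x / 2) ^ 2 - 1 := by
      have h := Real.cos_sq (x / 2)
      rw [show 2 * (x / 2) = x by ring] at h
      linarith
    have htanv : Real.tan (x / 2) = Real.sin (x / 2) / Real.cos (x / 2) :=
      Real.tan_eq_sin_div_cos _
    have hDx := hD x
    have hkey : (1 + (t * Real.tan (x / 2)) ^ 2) * Real.cos (x / 2) ^ 2
        = (1 + c * Real.cos x) / (1 + c) := by
      rw [htanv, hcosx, mul_pow, div_pow, ht2]
      field_simp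
      linear_combination (1 - c) * hsin2
    have hne : (1 + (t * Real.tan (x / 2)) ^ 2) ≠ 0 := by positivity
    have hu2 : Real.cos (x / 2) ^ 2 ≠ 0 := pow_ne_zero _ hcosne
    have harcval : 1 / (1 + (t * Real.tan (x / 2)) ^ 2)
          * (t * (1 / Real.cos (x / 2) ^ 2 * (1 / 2)))
        = t * (1 + c) / (2 * (1 + c * Real.cos x)) := by
      field_simp at hkey ⊢
      linear_combination (-t) * hkey
    rw [harcval, ← hst]
    have hsinsq : Real.sin x ^ 2 = 1 - Real.cos x ^ 2 := by
      nlinarith [Real.sin_sq_add_cos_sq x]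
    have h3 : s ≠ 0 := ne_of_gt hspos
    have hDne : (1 + c * Real.cos x) ≠ 0 := ne_of_gt hDx
    have h2' : (1 - c^2) ≠ 0 := ne_of_gt hc1
    field_simp
    linear_combination c ^ 2 * hsinsq
  have hint : IntervalIntegrable (fun x => 1 / (1 + c * Real.cos x) ^ 2) MeasureTheory.volume
      (-(Real.pi / 2)) (Real.pi / 2) := by
    exact (continuous_const.div
      ((continuous_const.add (continuous_const.mul Real.continuous_cos)).pow 2)
      (fun x => pow_ne_zero _ (ne_of_gt (hD x)))).intervalIntegrable _ _
  rw [intervalIntegral.integral_eq_sub_of_hasDerivAt hderiv hint]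
  have e1 : Real.tan (Real.pi / 2 / 2) = 1 := by
    rw [show Real.pi / 2 / 2 = Real.pi / 4 by ring]; exact Real.tan_pi_div_four
  have e2 : Real.tan (-(Real.pi / 2) / 2) = -1 := by
    rw [show -(Real.pi/2)/2 = -(Real.pi/4) by ring, Real.tan_neg, Real.tan_pi_div_four]
  simp only [hF, e1, e2, Real.sin_pi_div_two, Real.cos_pi_div_two, Real.sin_neg,
    Real.cos_neg, mul_one]
  rw [show t * (-1) = -t by ring, Real.arctan_neg]
  have hrpow : (1 - c ^ 2) ^ ((3:ℝ)/2) = (1 - c ^ 2) * s := by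
    rw [hs, Real.sqrt_eq_rpow, show ((3:ℝ)/2) = 1 + 1/2 by norm_num,
      Real.rpow_add hc1, Real.rpow_one]
  rw [hrpow]
  have hne2 : (1 - c^2) * s ≠ 0 := by positivity
  field_simp
  ring
end

section
/- Let α ∈ (0,1), Δ > 0, m ∈ ℝ, and set β = ln((2−α)/α). Then (1/Δ)·∫_{m−Δ/2}^{m+Δ/2} (β/(2(1−α)))²·sech⁴(β·(x − m)/Δ) dx = β·(3 − (1−α)²)/(6(1−α)). Consequently, the variance of the DSQ gradient surrogate under a uniformly distributed input over one quantization interval equals β·(3 − (1−α)²)/(6(1−α)) − 1. -/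
open Real

lemma my_hasDerivAt_tanh (x : ℝ) :
    HasDerivAt Real.tanh (1 / Real.cosh x ^ 2) x := by
  have h := ((Real.hasDerivAt_sinh x).div (Real.hasDerivAt_cosh x)
    (Real.cosh_pos x).ne')
  have heq : (Real.cosh x * Real.cosh x - Real.sinh x * Real.sinh x) /
      Real.cosh x ^ 2 = 1 / Real.cosh x ^ 2 := by
    rw [show Real.cosh x * Real.cosh x - Real.sinh x * Real.sinh x =
      Real.cosh x ^ 2 - Real.sinh x ^ 2 by ring, Real.cosh_sq_sub_sinh_sq]
  rw [show Real.tanh = fun y => Real.sinh y / Real.cosh y from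
    funext fun y => Real.tanh_eq_sinh_div_cosh y, ← heq]
  exact h

lemma inner_deriv (c Δ m : ℝ) (x : ℝ) :
    HasDerivAt (fun x : ℝ => c * (x - m) / Δ) (c / Δ) x := by
  simpa using (((hasDerivAt_id x).sub_const m).const_mul c).div_const Δ

lemma sech_sq_deriv (c Δ m : ℝ) (hc : c ≠ 0) (hΔ : Δ ≠ 0) (x : ℝ) :
    HasDerivAt (fun x : ℝ => (Δ / c) * Real.tanh (c * (x - m) / Δ))
      ((1 / Real.cosh (c * (x - m) / Δ)) ^ 2) x := by
  have h := ((my_hasDerivAt_tanh (c * (x - m) / Δ)).comp x (inner_deriv c Δ m x)).const_mul (Δ / c)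
  refine h.congr_deriv ?_
  have := (Real.cosh_pos (c * (x - m) / Δ)).ne'
  field_simp

lemma sech_sq_eq (y : ℝ) : 1 - Real.tanh y ^ 2 = 1 / Real.cosh y ^ 2 := by
  have h := Real.cosh_pos y
  rw [Real.tanh_eq_sinh_div_cosh]
  have h2 := Real.cosh_sq_sub_sinh_sq y
  field_simp
  exact h2

lemma sech_four_deriv (c Δ m : ℝ) (hc : c ≠ 0) (hΔ : Δ ≠ 0) (x : ℝ) :
    HasDerivAt (fun x : ℝ => (Δ / c) * (Real.tanh (c * (x - m) / Δ)
        - Real.tanh (c * (x - m) / Δ) ^ 3 / 3))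
      ((1 / Real.cosh (c * (x - m) / Δ)) ^ 4) x := by
  set u := c * (x - m) / Δ with hu
  have ht : HasDerivAt (fun y => Real.tanh y - Real.tanh y ^ 3 / 3)
      ((1 / Real.cosh u ^ 2) - Real.tanh u ^ 2 * (1 / Real.cosh u ^ 2)) u := by
    have h1 := my_hasDerivAt_tanh u
    have h2 := ((my_hasDerivAt_tanh u).pow 3).div_const 3
    refine (h1.sub h2).congr_deriv ?_
    ring
  have h := (ht.comp x (inner_deriv c Δ m x)).const_mul (Δ / c)
  refine h.congr_deriv ?_
  have hsech : (1 : ℝ) / Real.cosh u ^ 2 - Real.tanh u ^ 2 * (1 / Real.cosh u ^ 2)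
      = (1 / Real.cosh u ^ 2) ^ 2 := by
    rw [show (1 : ℝ) / Real.cosh u ^ 2 - Real.tanh u ^ 2 * (1 / Real.cosh u ^ 2)
      = (1 - Real.tanh u ^ 2) * (1 / Real.cosh u ^ 2) by ring, sech_sq_eq]
    ring
  have hcosh := (Real.cosh_pos u).ne'
  rw [show ((1:ℝ) / Real.cosh u) ^ 4 = ((1 / Real.cosh u ^ 2)) ^ 2 by ring, ← hsech]
  field_simp

lemma cont_sech (c Δ m : ℝ) (n : ℕ) :
    Continuous fun x : ℝ => (1 / Real.cosh (c * (x - m) / Δ)) ^ n := by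
  apply Continuous.pow
  exact continuous_const.div (Real.continuous_cosh.comp (by continuity))
    (fun x => (Real.cosh_pos _).ne')

lemma integral_sech_sq (c Δ m a b : ℝ) (hc : c ≠ 0) (hΔ : Δ ≠ 0) :
    ∫ x in a..b, (1 / Real.cosh (c * (x - m) / Δ)) ^ 2
      = (Δ / c) * Real.tanh (c * (b - m) / Δ) - (Δ / c) * Real.tanh (c * (a - m) / Δ) := by
  exact intervalIntegral.integral_eq_sub_of_hasDerivAt
    (fun x _ => sech_sq_deriv c Δ m hc hΔ x)
    ((cont_sech c Δ m 2).intervalIntegrable a b)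

lemma integral_sech_four (c Δ m a b : ℝ) (hc : c ≠ 0) (hΔ : Δ ≠ 0) :
    ∫ x in a..b, (1 / Real.cosh (c * (x - m) / Δ)) ^ 4
      = (Δ / c) * (Real.tanh (c * (b - m) / Δ) - Real.tanh (c * (b - m) / Δ) ^ 3 / 3)
        - (Δ / c) * (Real.tanh (c * (a - m) / Δ) - Real.tanh (c * (a - m) / Δ) ^ 3 / 3) := by
  exact intervalIntegral.integral_eq_sub_of_hasDerivAt
    (fun x _ => sech_four_deriv c Δ m hc hΔ x)
    ((cont_sech c Δ m 4).intervalIntegrable a b)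

lemma tanh_half_log (α : ℝ) (h0 : 0 < α) (h1 : α < 1) :
    Real.tanh (Real.log ((2 - α) / α) / 2) = 1 - α := by
  have hpos : (0:ℝ) < (2 - α) / α := div_pos (by linarith) h0
  set t := Real.exp (Real.log ((2 - α) / α) / 2) with htdef
  have htpos : 0 < t := Real.exp_pos _
  have ht2 : t ^ 2 = (2 - α) / α := by
    rw [htdef, sq, ← Real.exp_add, add_halves]
    exact Real.exp_log hpos
  rw [Real.tanh_eq_sinh_div_cosh, Real.sinh_eq, Real.cosh_eq, Real.exp_neg, ← htdef]
  have hquot : (t - t⁻¹) / 2 / ((t + t⁻¹) / 2) = (t ^ 2 - 1) / (t ^ 2 + 1) := by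
    have : t + t⁻¹ ≠ 0 := by positivity
    field_simp
  rw [hquot, ht2, div_eq_iff (by positivity)]
  field_simp
  ring

/-- Second moment and variance of the DSQ gradient surrogate under a uniform input over
one quantization interval `[m − Δ/2, m + Δ/2]`: with `β = ln((2−α)/α)`, the second moment
`(1/Δ)·∫ (β/(2(1−α)))²·sech⁴(β·(x−m)/Δ) dx` equals `β·(3 − (1−α)²)/(6(1−α))`, and
consequently the variance (second moment minus squared first moment) equals
`β·(3 − (1−α)²)/(6(1−α)) − 1`. -/
theorem dsq_gradient_second_moment_and_variance
    (α Δ m : ℝ) (hα : α ∈ Set.Ioo (0:ℝ) 1) (hΔ : 0 < Δ) :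
    ((1 / Δ) * ∫ x in (m - Δ / 2)..(m + Δ / 2),
        (Real.log ((2 - α) / α) / (2 * (1 - α))) ^ 2 *
          (1 / Real.cosh (Real.log ((2 - α) / α) * (x - m) / Δ)) ^ 4 =
      Real.log ((2 - α) / α) * (3 - (1 - α) ^ 2) / (6 * (1 - α))) ∧
    ((1 / Δ) * (∫ x in (m - Δ / 2)..(m + Δ / 2),
        (Real.log ((2 - α) / α) / (2 * (1 - α))) ^ 2 *
          (1 / Real.cosh (Real.log ((2 - α) / α) * (x - m) / Δ)) ^ 4) -
      ((1 / Δ) * ∫ x in (m - Δ / 2)..(m + Δ / 2),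
        (Real.log ((2 - α) / α) / (2 * (1 - α))) *
          (1 / Real.cosh (Real.log ((2 - α) / α) * (x - m) / Δ)) ^ 2) ^ 2 =
      Real.log ((2 - α) / α) * (3 - (1 - α) ^ 2) / (6 * (1 - α)) - 1) := by
  obtain ⟨h0, h1⟩ := hα
  set β := Real.log ((2 - α) / α) with hβ
  have hone : (1:ℝ) < (2 - α) / α := by
    rw [lt_div_iff₀ h0]; linarith
  have hβpos : 0 < β := Real.log_pos hone
  have hβne : β ≠ 0 := hβpos.ne'
  have hΔne : Δ ≠ 0 := hΔ.ne'
  have hargb : β * ((m + Δ / 2) - m) / Δ = β / 2 := by field_simp; ring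
  have harga : β * ((m - Δ / 2) - m) / Δ = -(β / 2) := by field_simp; ring
  have htanh : Real.tanh (β / 2) = 1 - α := tanh_half_log α h0 h1
  have hI4 : ∫ x in (m - Δ / 2)..(m + Δ / 2),
      (1 / Real.cosh (β * (x - m) / Δ)) ^ 4
      = 2 * (Δ / β) * ((1 - α) - (1 - α) ^ 3 / 3) := by
    rw [integral_sech_four β Δ m _ _ hβne hΔne, hargb, harga, Real.tanh_neg, htanh]
    ring
  have hI2 : ∫ x in (m - Δ / 2)..(m + Δ / 2),
      (1 / Real.cosh (β * (x - m) / Δ)) ^ 2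
      = 2 * (Δ / β) * (1 - α) := by
    rw [integral_sech_sq β Δ m _ _ hβne hΔne, hargb, harga, Real.tanh_neg, htanh]
    ring
  have h1α : (1:ℝ) - α ≠ 0 := by intro h; linarith [h1]; 
  have hsecond : (1 / Δ) * ∫ x in (m - Δ / 2)..(m + Δ / 2),
      (β / (2 * (1 - α))) ^ 2 * (1 / Real.cosh (β * (x - m) / Δ)) ^ 4
      = β * (3 - (1 - α) ^ 2) / (6 * (1 - α)) := by
    rw [intervalIntegral.integral_const_mul, hI4]
    field_simp
    ring
  have hfirst : (1 / Δ) * ∫ x in (m - Δ / 2)..(m + Δ / 2),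
      (β / (2 * (1 - α))) * (1 / Real.cosh (β * (x - m) / Δ)) ^ 2 = 1 := by
    rw [intervalIntegral.integral_const_mul, hI2]
    field_simp
  refine ⟨hsecond, ?_⟩
  rw [hsecond, hfirst]
  ring
end

section
/- As c → 1 from the left, the expression (16c²/(π·(1−c²)^{3/2}))·arctan(√((1−c)/(1+c))) − 8c/(π·(1−c²)) + 1 − ((8/(π·√(1−c²)))·arctan(√((1−c)/(1+c))) − 1)² tends to 16/(3π) − 16/π². Equivalently, the variance of the StableQAT gradient surrogate remains bounded and converges to 16/(3π) − 16/π² as the surrogate sharpens toward the rounding function. -/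
open Real Filter

private lemma sin_div_lim : Tendsto (fun s : ℝ => Real.sin s / s) (nhdsWithin 0 (Set.Ioi 0)) (nhds 1) := by
  have h := (Real.hasDerivAt_sin 0)
  rw [Real.cos_zero, hasDerivAt_iff_tendsto_slope] at h
  have h2 : Tendsto (slope Real.sin 0) (nhdsWithin 0 (Set.Ioi 0)) (nhds 1) :=
    h.mono_left (nhdsWithin_mono 0 (fun x hx => ne_of_gt hx))
  refine h2.congr (fun s => ?_)
  simp [slope_def_field]

private lemma div_sin_lim : Tendsto (fun s : ℝ => s / Real.sin s) (nhdsWithin 0 (Set.Ioi 0)) (nhds 1) := by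
  have := (sin_div_lim).inv₀ (by norm_num)
  simpa [inv_div] using this

private lemma cube_lim : Tendsto (fun s : ℝ => (s * Real.cos s - Real.sin s) / s ^ 3)
    (nhdsWithin 0 (Set.Ioi 0)) (nhds (-(1/3))) := by
  apply HasDerivAt.lhopital_zero_nhdsGT
    (f' := fun s => -(s * Real.sin s)) (g' := fun s => 3 * s ^ 2)
  · filter_upwards with s
    have h1 : HasDerivAt (fun s : ℝ => s * Real.cos s - Real.sin s)
        (1 * Real.cos s + s * (-Real.sin s) - Real.cos s) s :=
      ((hasDerivAt_id s).mul (Real.hasDerivAt_cos s)).sub (Real.hasDerivAt_sin s)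
    convert h1 using 1; ring
  · filter_upwards with s
    simpa using hasDerivAt_pow 3 s
  · filter_upwards [self_mem_nhdsWithin] with s hs
    have : (0:ℝ) < s := hs
    positivity
  · have : Tendsto (fun s : ℝ => s * Real.cos s - Real.sin s) (nhds 0) (nhds 0) := by
      have := ((continuous_id.mul Real.continuous_cos).sub Real.continuous_sin).tendsto 0
      simpa using (show Tendsto (fun s : ℝ => s * Real.cos s - Real.sin s) (nhds 0) (nhds (0 * Real.cos 0 - Real.sin 0)) from this)
    exact this.mono_left nhdsWithin_le_nhds
  · have : Tendsto (fun s : ℝ => s ^ 3) (nhds 0) (nhds 0) := by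
      simpa using (continuous_pow 3).tendsto (0:ℝ)
    exact this.mono_left nhdsWithin_le_nhds
  · have h : Tendsto (fun s : ℝ => -(Real.sin s / s) / 3) (nhdsWithin 0 (Set.Ioi 0))
        (nhds (-(1/3))) := by
      have := (sin_div_lim).neg.div_const 3
      convert this using 2
      norm_num
    refine h.congr' ?_
    filter_upwards [self_mem_nhdsWithin] with s hs
    have hs0 : (s:ℝ) ≠ 0 := ne_of_gt hs
    field_simp

private lemma g_lim : Tendsto (fun s : ℝ =>
    8 / Real.pi * (Real.cos s * ((s * Real.cos s - Real.sin s) / s ^ 3) * (s / Real.sin s) ^ 3)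
      + 1 - (4 / Real.pi * (s / Real.sin s) - 1) ^ 2)
    (nhdsWithin 0 (Set.Ioi 0)) (nhds (16 / (3 * Real.pi) - 16 / Real.pi ^ 2)) := by
  have hcos : Tendsto (fun s : ℝ => Real.cos s) (nhdsWithin 0 (Set.Ioi 0)) (nhds 1) := by
    have := Real.continuous_cos.tendsto 0
    rw [Real.cos_zero] at this
    exact this.mono_left nhdsWithin_le_nhds
  have t1 : Tendsto (fun s : ℝ =>
      8 / Real.pi * (Real.cos s * ((s * Real.cos s - Real.sin s) / s ^ 3) * (s / Real.sin s) ^ 3)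
        + 1) (nhdsWithin 0 (Set.Ioi 0)) (nhds (8 / Real.pi * (1 * (-(1/3)) * 1 ^ 3) + 1)) :=
    (((hcos.mul cube_lim).mul (div_sin_lim.pow 3)).const_mul (8 / Real.pi)).add
      (tendsto_const_nhds (x := (1:ℝ)))
  have t2 : Tendsto (fun s : ℝ => (4 / Real.pi * (s / Real.sin s) - 1) ^ 2)
      (nhdsWithin 0 (Set.Ioi 0)) (nhds ((4 / Real.pi * 1 - 1) ^ 2)) :=
    ((div_sin_lim.const_mul (4 / Real.pi)).sub (tendsto_const_nhds (x := (1:ℝ)))).pow 2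
  have h := t1.sub t2
  convert h using 2
  have hpi : Real.pi ≠ 0 := Real.pi_ne_zero
  field_simp
  ring

/-- The variance of the StableQAT gradient surrogate remains bounded and converges to
`16/(3π) − 16/π²` as the surrogate sharpens toward the rounding function (`c → 1⁻`). -/
theorem stableqat_variance_limit :
    Tendsto
      (fun c : ℝ =>
        (16 * c ^ 2 / (Real.pi * (1 - c ^ 2) ^ ((3 : ℝ) / 2))) *
          Real.arctan (Real.sqrt ((1 - c) / (1 + c))) -
        8 * c / (Real.pi * (1 - c ^ 2)) + 1 -
        ((8 / (Real.pi * Real.sqrt (1 - c ^ 2))) *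
          Real.arctan (Real.sqrt ((1 - c) / (1 + c))) - 1) ^ 2)
      (nhdsWithin 1 (Set.Iio 1))
      (nhds (16 / (3 * Real.pi) - 16 / Real.pi ^ 2)) := by
  -- substitution s = arccos c
  have harccos : Tendsto Real.arccos (nhdsWithin 1 (Set.Iio 1)) (nhdsWithin 0 (Set.Ioi 0)) := by
    apply tendsto_nhdsWithin_of_tendsto_nhds_of_eventually_within
    · have := Real.continuous_arccos.tendsto 1
      rw [Real.arccos_one] at this
      exact this.mono_left nhdsWithin_le_nhds
    · filter_upwards [self_mem_nhdsWithin] with c hc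
      exact Real.arccos_pos.mpr hc
  have hcomp := g_lim.comp harccos
  refine hcomp.congr' ?_
  have hmem : Set.Ioo (0:ℝ) 1 ∈ nhdsWithin 1 (Set.Iio 1) :=
    Ioo_mem_nhdsLT_of_mem (by norm_num)
  filter_upwards [hmem] with c hc
  obtain ⟨hc0, hc1⟩ := hc
  set s := Real.arccos c with hs
  have hcb : -1 ≤ c := by linarith
  have hcb' : c ≤ 1 := le_of_lt hc1
  have hspos : 0 < s := Real.arccos_pos.mpr hc1
  have hslt : s < Real.pi / 2 := Real.arccos_lt_pi_div_two.mpr hc0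
  have hcoss : Real.cos s = c := Real.cos_arccos hcb hcb'
  have hsins : Real.sin s = Real.sqrt (1 - c ^ 2) := Real.sin_arccos c
  have h1c2 : (0:ℝ) < 1 - c ^ 2 := by nlinarith
  have hsinpos : 0 < Real.sin s := by
    rw [hsins]; exact Real.sqrt_pos.mpr h1c2
  -- arctan identity
  have harctan : Real.arctan (Real.sqrt ((1 - c) / (1 + c))) = s / 2 := by
    have hpi : 0 < Real.pi := Real.pi_pos
    have hsle : s ≤ Real.pi := Real.arccos_le_pi c
    have hsin2 : Real.sin (s / 2) = Real.sqrt ((1 - c) / 2) := by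
      rw [Real.sin_half_eq_sqrt (le_of_lt hspos) (by linarith), hcoss]
    have hcos2 : Real.cos (s / 2) = Real.sqrt ((1 + c) / 2) := by
      rw [Real.cos_half (by linarith) hsle, hcoss]
    have htan : Real.tan (s / 2) = Real.sqrt ((1 - c) / (1 + c)) := by
      rw [Real.tan_eq_sin_div_cos, hsin2, hcos2, ← Real.sqrt_div (by linarith)]
      congr 1
      rw [div_div_div_comm]
      norm_num
    rw [← htan, Real.arctan_tan (by linarith) (by linarith)]
  -- rewrite powers
  have hrpow : (1 - c ^ 2) ^ ((3:ℝ) / 2) = Real.sqrt (1 - c ^ 2) ^ 3 := by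
    rw [Real.sqrt_eq_rpow, ← Real.rpow_natCast ((1 - c ^ 2) ^ ((1:ℝ)/2)) 3,
      ← Real.rpow_mul (le_of_lt h1c2)]
    · norm_num
  have hsq : Real.sqrt (1 - c ^ 2) ^ 2 = 1 - c ^ 2 := Real.sq_sqrt (le_of_lt h1c2)
  simp only [Function.comp_apply, ← hs]
  rw [hcoss, hsins, harctan, hrpow]
  have hsqrtpos : 0 < Real.sqrt (1 - c ^ 2) := Real.sqrt_pos.mpr h1c2
  have hpi : Real.pi ≠ 0 := Real.pi_ne_zero
  have hs0 : s ≠ 0 := ne_of_gt hspos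
  set u := Real.sqrt (1 - c ^ 2) with hu
  have hu0 : u ≠ 0 := ne_of_gt hsqrtpos
  rw [← hsq]
  field_simp
  ring
end

section
/- Let f be the triangle wave with period T = √2 and let its Fourier coefficients on [0, T] be α₀ = (1/T)∫₀ᵀ f(t) dt, α_k = (2/T)∫₀ᵀ f(t)·cos(2πkt/T) dt, and β_k = (2/T)∫₀ᵀ f(t)·sin(2πkt/T) dt for k ≥ 1. Then α₀ = 0, α_k = 0 for all k ≥ 1, β_k = 0 whenever k is even, and β_{2m+1} = −(2√2/π²)·(−1)^m/(2m+1)² for every m ∈ ℕ. -/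
open MeasureTheory Real

/-- The triangle wave obtained by rotating the rounding function by 45°:
`f(t) = (1/(2√2))·(1 − 4·|frac((t − √2/4)/√2) − 1/2|)`, periodic with period `√2`. -/
noncomputable def triangleWave (t : ℝ) : ℝ :=
  (1 / (2 * Real.sqrt 2)) *
    (1 - 4 * |Int.fract ((t - Real.sqrt 2 / 4) / Real.sqrt 2) - 1 / 2|)

/-- Zeroth Fourier coefficient of `f` on `[0, T]`. -/
noncomputable def fourierA0 (T : ℝ) (f : ℝ → ℝ) : ℝ := (1 / T) * ∫ u in (0:ℝ)..T, f u

/-- Cosine Fourier coefficients of `f` on `[0, T]`. -/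
noncomputable def fourierA (T : ℝ) (f : ℝ → ℝ) (k : ℕ) : ℝ :=
  (2 / T) * ∫ u in (0:ℝ)..T, f u * Real.cos (2 * Real.pi * k * u / T)

/-- Sine Fourier coefficients of `f` on `[0, T]`. -/
noncomputable def fourierB (T : ℝ) (f : ℝ → ℝ) (k : ℕ) : ℝ :=
  (2 / T) * ∫ u in (0:ℝ)..T, f u * Real.sin (2 * Real.pi * k * u / T)

lemma sq2_pos : (0:ℝ) < Real.sqrt 2 := Real.sqrt_pos.mpr (by norm_num)
lemma sq2_sq : Real.sqrt 2 * Real.sqrt 2 = 2 := Real.mul_self_sqrt (by norm_num)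

lemma tw_piece1 {t : ℝ} (ht : t ∈ Set.Icc 0 (Real.sqrt 2 / 4)) : triangleWave t = -t := by
  have hr := sq2_pos; have hr2 := sq2_sq
  obtain ⟨h0, h1⟩ := ht
  rcases eq_or_lt_of_le h1 with h | h
  · subst h
    have e : (Real.sqrt 2 / 4 - Real.sqrt 2 / 4) / Real.sqrt 2 = 0 := by ring
    rw [triangleWave, e, Int.fract_zero, show |(0:ℝ) - 1/2| = 1/2 by norm_num]
    field_simp
    linarith [sq2_sq]
  · set s := (t - Real.sqrt 2 / 4) / Real.sqrt 2 with hs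
    have hsl : -1 ≤ s := by
      rw [hs, le_div_iff₀ hr]; nlinarith
    have hsu : s < 0 := by
      rw [hs, div_lt_iff₀ hr]; nlinarith
    have hfl : ⌊s⌋ = -1 := by
      rw [Int.floor_eq_iff]; push_cast; constructor <;> linarith
    have hfr : Int.fract s = s + 1 := by
      rw [Int.fract, hfl]; push_cast; ring
    have hs14 : -(1/4 : ℝ) ≤ s := by
      rw [hs, le_div_iff₀ hr]; nlinarith
    rw [triangleWave, ← hs, hfr, show s + 1 - 1/2 = s + 1/2 by ring,
      abs_of_nonneg (by linarith)]
    rw [hs]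
    field_simp
    nlinarith [hr2]

lemma tw_piece2 {t : ℝ} (ht : t ∈ Set.Icc (Real.sqrt 2 / 4) (3 * Real.sqrt 2 / 4)) :
    triangleWave t = t - Real.sqrt 2 / 2 := by
  have hr := sq2_pos; have hr2 := sq2_sq
  obtain ⟨h0, h1⟩ := ht
  set s := (t - Real.sqrt 2 / 4) / Real.sqrt 2 with hs
  have hsl : 0 ≤ s := by rw [hs, le_div_iff₀ hr]; nlinarith
  have hsu : s ≤ 1/2 := by rw [hs, div_le_iff₀ hr]; nlinarith
  have hfr : Int.fract s = s := Int.fract_eq_self.mpr ⟨hsl, by linarith⟩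
  rw [triangleWave, ← hs, hfr, abs_of_nonpos (by linarith), hs]
  field_simp
  nlinarith [hr2]

lemma tw_piece3 {t : ℝ} (ht : t ∈ Set.Icc (3 * Real.sqrt 2 / 4) (Real.sqrt 2)) :
    triangleWave t = Real.sqrt 2 - t := by
  have hr := sq2_pos; have hr2 := sq2_sq
  obtain ⟨h0, h1⟩ := ht
  set s := (t - Real.sqrt 2 / 4) / Real.sqrt 2 with hs
  have hsl : 1/2 ≤ s := by rw [hs, le_div_iff₀ hr]; nlinarith
  have hsu : s ≤ 3/4 := by rw [hs, div_le_iff₀ hr]; nlinarith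
  have hfr : Int.fract s = s := Int.fract_eq_self.mpr ⟨by linarith, by linarith⟩
  rw [triangleWave, ← hs, hfr, abs_of_nonneg (by linarith), hs]
  field_simp
  nlinarith [hr2]

lemma hasDerivAt_lincos (p q a : ℝ) (ha : a ≠ 0) (t : ℝ) :
    HasDerivAt (fun t => (p + q * t) * Real.sin (a * t) / a + q * Real.cos (a * t) / a ^ 2)
      ((p + q * t) * Real.cos (a * t)) t := by
  have hs : HasDerivAt (fun t => Real.sin (a * t)) (a * Real.cos (a * t)) t := by
    simpa [mul_comm, Function.comp_def] using (Real.hasDerivAt_sin (a * t)).comp t ((hasDerivAt_id t).const_mul a)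
  have hc : HasDerivAt (fun t => Real.cos (a * t)) (-(a * Real.sin (a * t))) t := by
    simpa [mul_comm, Function.comp_def] using (Real.hasDerivAt_cos (a * t)).comp t ((hasDerivAt_id t).const_mul a)
  have hl : HasDerivAt (fun t => p + q * t) q t := by
    simpa using ((hasDerivAt_id t).const_mul q).const_add p
  have h1 := ((hl.mul hs).div_const a).add ((hc.const_mul q).div_const (a ^ 2))
  refine h1.congr_deriv ?_
  field_simp
  ring

lemma hasDerivAt_linsin (p q a : ℝ) (ha : a ≠ 0) (t : ℝ) :
    HasDerivAt (fun t => -((p + q * t) * Real.cos (a * t)) / a + q * Real.sin (a * t) / a ^ 2)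
      ((p + q * t) * Real.sin (a * t)) t := by
  have hs : HasDerivAt (fun t => Real.sin (a * t)) (a * Real.cos (a * t)) t := by
    simpa [mul_comm, Function.comp_def] using (Real.hasDerivAt_sin (a * t)).comp t ((hasDerivAt_id t).const_mul a)
  have hc : HasDerivAt (fun t => Real.cos (a * t)) (-(a * Real.sin (a * t))) t := by
    simpa [mul_comm, Function.comp_def] using (Real.hasDerivAt_cos (a * t)).comp t ((hasDerivAt_id t).const_mul a)
  have hl : HasDerivAt (fun t => p + q * t) q t := by
    simpa using ((hasDerivAt_id t).const_mul q).const_add p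
  have h1 := (((hl.mul hc).neg).div_const a).add ((hs.const_mul q).div_const (a ^ 2))
  refine h1.congr_deriv ?_
  field_simp
  ring

lemma integral_lincos (p q a x y : ℝ) (ha : a ≠ 0) :
    ∫ t in x..y, (p + q * t) * Real.cos (a * t) =
      ((p + q * y) * Real.sin (a * y) / a + q * Real.cos (a * y) / a ^ 2) -
      ((p + q * x) * Real.sin (a * x) / a + q * Real.cos (a * x) / a ^ 2) := by
  apply intervalIntegral.integral_eq_sub_of_hasDerivAt
    (fun t _ => hasDerivAt_lincos p q a ha t)
  apply Continuous.intervalIntegrable; continuity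

lemma integral_linsin (p q a x y : ℝ) (ha : a ≠ 0) :
    ∫ t in x..y, (p + q * t) * Real.sin (a * t) =
      (-((p + q * y) * Real.cos (a * y)) / a + q * Real.sin (a * y) / a ^ 2) -
      (-((p + q * x) * Real.cos (a * x)) / a + q * Real.sin (a * x) / a ^ 2) := by
  apply intervalIntegral.integral_eq_sub_of_hasDerivAt
    (fun t _ => hasDerivAt_linsin p q a ha t)
  apply Continuous.intervalIntegrable; continuity

lemma integral_lin (p q x y : ℝ) :
    ∫ t in x..y, (p + q * t) = (p * y + q * y ^ 2 / 2) - (p * x + q * x ^ 2 / 2) := by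
  apply intervalIntegral.integral_eq_sub_of_hasDerivAt (f := fun t => p * t + q * t ^ 2 / 2)
  · intro t _
    have : HasDerivAt (fun t => p * t + q * t ^ 2 / 2) (p + q * t) t := by
      have h1 : HasDerivAt (fun t : ℝ => p * t) p t := by
        simpa using (hasDerivAt_id t).const_mul p
      have h2 : HasDerivAt (fun t : ℝ => q * t ^ 2 / 2) (q * t) t := by
        have := ((hasDerivAt_pow 2 t).const_mul q).div_const 2
        refine this.congr_deriv ?_; push_cast; ring
      exact h1.add h2
    exact this
  · apply Continuous.intervalIntegrable; continuity

lemma tw_integral_split (g : ℝ → ℝ) (hg : Continuous g) :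
    (∫ t in (0:ℝ)..Real.sqrt 2, triangleWave t * g t) =
      (∫ t in (0:ℝ)..(Real.sqrt 2 / 4), (0 + (-1) * t) * g t) +
      (∫ t in (Real.sqrt 2 / 4)..(3 * Real.sqrt 2 / 4), (-(Real.sqrt 2 / 2) + 1 * t) * g t) +
      (∫ t in (3 * Real.sqrt 2 / 4)..(Real.sqrt 2), (Real.sqrt 2 + (-1) * t) * g t) := by
  have hr := sq2_pos
  have l01 : (0:ℝ) ≤ Real.sqrt 2 / 4 := by linarith
  have l12 : Real.sqrt 2 / 4 ≤ 3 * Real.sqrt 2 / 4 := by linarith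
  have l23 : 3 * Real.sqrt 2 / 4 ≤ Real.sqrt 2 := by linarith
  have e1 : Set.EqOn (fun t => triangleWave t * g t) (fun t => (0 + (-1) * t) * g t)
      (Set.Icc 0 (Real.sqrt 2 / 4)) := fun t ht => by
    simp only []; rw [tw_piece1 ht]; ring
  have e2 : Set.EqOn (fun t => triangleWave t * g t)
      (fun t => (-(Real.sqrt 2 / 2) + 1 * t) * g t)
      (Set.Icc (Real.sqrt 2 / 4) (3 * Real.sqrt 2 / 4)) := fun t ht => by
    simp only []; rw [tw_piece2 ht]; ring
  have e3 : Set.EqOn (fun t => triangleWave t * g t)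
      (fun t => (Real.sqrt 2 + (-1) * t) * g t)
      (Set.Icc (3 * Real.sqrt 2 / 4) (Real.sqrt 2)) := fun t ht => by
    simp only []; rw [tw_piece3 ht]; ring
  have i1 : IntervalIntegrable (fun t => triangleWave t * g t) volume 0 (Real.sqrt 2 / 4) := by
    rw [intervalIntegrable_iff_integrableOn_Icc_of_le l01]
    exact ((Continuous.mul (by continuity) hg).integrableOn_Icc).congr_fun
      e1.symm measurableSet_Icc
  have i2 : IntervalIntegrable (fun t => triangleWave t * g t) volume
      (Real.sqrt 2 / 4) (3 * Real.sqrt 2 / 4) := by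
    rw [intervalIntegrable_iff_integrableOn_Icc_of_le l12]
    exact ((Continuous.mul (by continuity) hg).integrableOn_Icc).congr_fun
      e2.symm measurableSet_Icc
  have i3 : IntervalIntegrable (fun t => triangleWave t * g t) volume
      (3 * Real.sqrt 2 / 4) (Real.sqrt 2) := by
    rw [intervalIntegrable_iff_integrableOn_Icc_of_le l23]
    exact ((Continuous.mul (by continuity) hg).integrableOn_Icc).congr_fun
      e3.symm measurableSet_Icc
  rw [← intervalIntegral.integral_add_adjacent_intervals (i1.trans i2) i3,
    ← intervalIntegral.integral_add_adjacent_intervals i1 i2]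
  have c1 := intervalIntegral.integral_congr (μ := volume) (a := 0) (b := Real.sqrt 2 / 4)
    (fun t ht => e1 (by rwa [Set.uIcc_of_le l01] at ht))
  have c2 := intervalIntegral.integral_congr (μ := volume) (a := Real.sqrt 2 / 4)
    (b := 3 * Real.sqrt 2 / 4) (fun t ht => e2 (by rwa [Set.uIcc_of_le l12] at ht))
  have c3 := intervalIntegral.integral_congr (μ := volume) (a := 3 * Real.sqrt 2 / 4)
    (b := Real.sqrt 2) (fun t ht => e3 (by rwa [Set.uIcc_of_le l23] at ht))
  rw [c1, c2, c3]

lemma fourierB_master (k : ℕ) (hk : 1 ≤ k) :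
    (2 / Real.sqrt 2) * ∫ u in (0:ℝ)..Real.sqrt 2,
        triangleWave u * Real.sin (2 * Real.pi * k * u / Real.sqrt 2) =
      -2 * Real.sqrt 2 * Real.sin (Real.pi * k / 2) / (Real.pi ^ 2 * k ^ 2) := by
  have hr := sq2_pos
  have hπ := Real.pi_pos
  have hk' : (1:ℝ) ≤ (k:ℝ) := by exact_mod_cast hk
  have hkne : (k:ℝ) ≠ 0 := by linarith
  set r := Real.sqrt 2 with hrdef
  have hrne : r ≠ 0 := ne_of_gt hr
  have ha : (2 * Real.pi * k / r) ≠ 0 := by positivity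
  have hg : ∀ u : ℝ, Real.sin (2 * Real.pi * k * u / r) =
      Real.sin ((2 * Real.pi * k / r) * u) := fun u => by ring_nf
  simp only [hg]
  rw [tw_integral_split (fun u => Real.sin ((2 * Real.pi * k / r) * u)) (by continuity)]
  rw [integral_linsin _ _ _ _ _ ha, integral_linsin _ _ _ _ _ ha, integral_linsin _ _ _ _ _ ha]
  have e0 : (2 * Real.pi * k / r) * 0 = 0 := by ring
  have e1 : (2 * Real.pi * k / r) * (r / 4) = Real.pi * k / 2 := by field_simp; ring
  have e2 : (2 * Real.pi * k / r) * (3 * r / 4) = 2 * Real.pi * k - Real.pi * k / 2 := by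
    field_simp; ring
  have e3 : (2 * Real.pi * k / r) * r = 2 * Real.pi * k := by field_simp
  rw [e0, e1, e2, e3, Real.sin_sub, Real.cos_sub]
  have hs2 : Real.sin (2 * Real.pi * k) = 0 := by
    rw [show (2:ℝ) * Real.pi * k = ((2 * k : ℕ) : ℝ) * Real.pi by push_cast; ring]
    exact Real.sin_nat_mul_pi _
  have hc2 : Real.cos (2 * Real.pi * k) = 1 := by
    rw [show (2:ℝ) * Real.pi * k = ((k : ℕ) : ℝ) * (2 * Real.pi) by push_cast; ring]
    exact Real.cos_nat_mul_two_pi _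
  rw [hs2, hc2, Real.sin_zero, Real.cos_zero]
  field_simp
  ring

lemma fourierA_master (k : ℕ) (hk : 1 ≤ k) :
    (2 / Real.sqrt 2) * ∫ u in (0:ℝ)..Real.sqrt 2,
        triangleWave u * Real.cos (2 * Real.pi * k * u / Real.sqrt 2) = 0 := by
  have hr := sq2_pos
  have hπ := Real.pi_pos
  have hk' : (1:ℝ) ≤ (k:ℝ) := by exact_mod_cast hk
  have hkne : (k:ℝ) ≠ 0 := by linarith
  set r := Real.sqrt 2 with hrdef
  have hrne : r ≠ 0 := ne_of_gt hr
  have ha : (2 * Real.pi * k / r) ≠ 0 := by positivity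
  have hg : ∀ u : ℝ, Real.cos (2 * Real.pi * k * u / r) =
      Real.cos ((2 * Real.pi * k / r) * u) := fun u => by ring_nf
  simp only [hg]
  rw [tw_integral_split (fun u => Real.cos ((2 * Real.pi * k / r) * u)) (by continuity)]
  rw [integral_lincos _ _ _ _ _ ha, integral_lincos _ _ _ _ _ ha, integral_lincos _ _ _ _ _ ha]
  have e0 : (2 * Real.pi * k / r) * 0 = 0 := by ring
  have e1 : (2 * Real.pi * k / r) * (r / 4) = Real.pi * k / 2 := by field_simp; ring
  have e2 : (2 * Real.pi * k / r) * (3 * r / 4) = 2 * Real.pi * k - Real.pi * k / 2 := by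
    field_simp; ring
  have e3 : (2 * Real.pi * k / r) * r = 2 * Real.pi * k := by field_simp
  rw [e0, e1, e2, e3, Real.sin_sub, Real.cos_sub]
  have hs2 : Real.sin (2 * Real.pi * k) = 0 := by
    rw [show (2:ℝ) * Real.pi * k = ((2 * k : ℕ) : ℝ) * Real.pi by push_cast; ring]
    exact Real.sin_nat_mul_pi _
  have hc2 : Real.cos (2 * Real.pi * k) = 1 := by
    rw [show (2:ℝ) * Real.pi * k = ((k : ℕ) : ℝ) * (2 * Real.pi) by push_cast; ring]
    exact Real.cos_nat_mul_two_pi _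
  rw [hs2, hc2, Real.sin_zero, Real.cos_zero]
  field_simp
  ring

lemma fourierA0_master :
    (1 / Real.sqrt 2) * ∫ u in (0:ℝ)..Real.sqrt 2, triangleWave u = 0 := by
  have : (∫ u in (0:ℝ)..Real.sqrt 2, triangleWave u) =
      ∫ u in (0:ℝ)..Real.sqrt 2, triangleWave u * (fun _ : ℝ => (1:ℝ)) u := by
    simp
  rw [this, tw_integral_split (fun _ => (1:ℝ)) continuous_const]
  simp only [mul_one]
  rw [integral_lin, integral_lin, integral_lin]
  ring


/-- Fourier coefficients of the triangle wave with period `T = √2`: `α₀ = 0`,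
`α_k = 0` for all `k ≥ 1`, `β_k = 0` for even `k ≥ 1`, and
`β_{2m+1} = −(2√2/π²)·(−1)^m/(2m+1)²` for every `m ∈ ℕ`. -/
theorem triangleWave_fourier_coeffs :
    fourierA0 (Real.sqrt 2) triangleWave = 0 ∧
    (∀ k : ℕ, 1 ≤ k → fourierA (Real.sqrt 2) triangleWave k = 0) ∧
    (∀ k : ℕ, 1 ≤ k → Even k → fourierB (Real.sqrt 2) triangleWave k = 0) ∧
    (∀ m : ℕ, fourierB (Real.sqrt 2) triangleWave (2 * m + 1) =
      -(2 * Real.sqrt 2 / Real.pi ^ 2) * ((-1 : ℝ) ^ m / (2 * (m : ℝ) + 1) ^ 2)) := by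
  have hπ := Real.pi_pos
  refine ⟨fourierA0_master, fun k hk => fourierA_master k hk, ?_, ?_⟩
  · intro k hk hke
    rw [fourierB, fourierB_master k hk]
    obtain ⟨n, hn⟩ := hke
    have : Real.pi * k / 2 = (n : ℝ) * Real.pi := by
      subst hn; push_cast; ring
    rw [this, Real.sin_nat_mul_pi]
    simp
  · intro m
    rw [fourierB, fourierB_master (2 * m + 1) (by omega)]
    have h1 : Real.pi * ((2 * m + 1 : ℕ) : ℝ) / 2 = (m : ℝ) * Real.pi + Real.pi / 2 := by
      push_cast; ring
    have h3 : Real.cos ((m : ℝ) * Real.pi) = (-1) ^ m := by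
      simpa using Real.cos_add_nat_mul_pi 0 m
    rw [h1, Real.sin_add_pi_div_two, h3]
    have h2 : ((2 * m + 1 : ℕ) : ℝ) = 2 * (m : ℝ) + 1 := by push_cast; ring
    rw [h2]
    have hm : (2 * (m : ℝ) + 1) ≠ 0 := by positivity
    field_simp
end

section
/- Let f be the triangle wave and for t ∈ ℝ set x = (t − f(t))/√2 and x_q = (t + f(t))/√2 (the image of the point (t, f(t)) under counterclockwise rotation by 45 degrees). Then for every t ∈ ℝ such that x is not a half-integer (i.e., x − ⌊x⌋ ≠ 1/2), x_q equals round(x), the nearest integer to x. -/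
open Real

/-- Rotating the graph of the triangle wave by 45° counterclockwise yields the rounding
function: with `x = (t − f(t))/√2` and `x_q = (t + f(t))/√2`, whenever `x` is not a
half-integer, `x_q` equals the integer nearest to `x`. -/
theorem triangleWave_rotation_is_round (t x xq : ℝ)
    (hx : x = (t - triangleWave t) / Real.sqrt 2)
    (hxq : xq = (t + triangleWave t) / Real.sqrt 2)
    (h : Int.fract x ≠ 1 / 2) :
    xq = (round x : ℤ) := by
  have h2 : (0:ℝ) < Real.sqrt 2 := by positivity
  have hsq : Real.sqrt 2 * Real.sqrt 2 = 2 := Real.mul_self_sqrt (by norm_num)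
  set s := (t - Real.sqrt 2 / 4) / Real.sqrt 2 with hs
  set u := Int.fract s with hu
  set n := ⌊s⌋ with hn
  have hsu : s = (n : ℝ) + u := by
    rw [hu, hn, Int.floor_add_fract]
  have hu0 : 0 ≤ u := Int.fract_nonneg s
  have hu1 : u < 1 := Int.fract_lt_one s
  have hf : triangleWave t = Real.sqrt 2 * (1/4 - |u - 1/2|) := by
    unfold triangleWave
    rw [← hs, ← hu]
    have h12 : (1:ℝ) / (2 * Real.sqrt 2) = Real.sqrt 2 / 4 := by
      rw [div_eq_div_iff (by positivity) (by norm_num)]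
      nlinarith [hsq]
    rw [h12]; ring
  have hts : t = Real.sqrt 2 * (s + 1/4) := by
    rw [hs]; field_simp; ring
  have hx' : x = s + |u - 1/2| := by
    rw [hx, hf, hts]
    field_simp
    ring
  have hxq' : xq = s + 1/2 - |u - 1/2| := by
    rw [hxq, hf, hts]
    field_simp
    ring
  rcases le_or_gt u (1/2) with hc | hc
  · exfalso
    apply h
    have habs : |u - 1/2| = 1/2 - u := by
      rw [abs_of_nonpos (by linarith)]; ring
    have : x = (n : ℝ) + 1/2 := by rw [hx', habs, hsu]; ring
    rw [this, Int.fract_intCast_add]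
    norm_num [Int.fract_eq_self]
  · have habs : |u - 1/2| = u - 1/2 := abs_of_pos (by linarith)
    have hxv : x = (n : ℝ) + (2*u - 1/2) := by rw [hx', habs, hsu]; ring
    have hxqv : xq = (n : ℝ) + 1 := by rw [hxq', habs, hsu]; ring
    have hr : round x = n + 1 := by
      rw [round_eq, hxv]
      have : (n : ℝ) + (2*u - 1/2) + 1/2 = (n : ℝ) + 2*u := by ring
      rw [this, Int.floor_intCast_add]
      have : ⌊2*u⌋ = 1 := by
        apply Int.floor_eq_iff.mpr
        constructor <;> push_cast <;> linarith
      rw [this]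
    rw [hr, hxqv]; push_cast; ring
end
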